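/- In any execution of the fully dynamic algorithm, for every realization of the random choices and every level 0 ≤ ℓ ≤ L, the candidate set size satisfies |A_ℓ| ≤ 4n/2^ℓ (i.e., n/2^{ℓ−2}) at all times during the execution. -/
import Mathlib


open Finset

attribute [local instance] Classical.propDecidable

universe u

/-- A matroid on a ground set `α`, given as a nonempty, downward closed family of
finite independent sets satisfying the augmentation property. -/
structure MatroidOn (α : Type u) where
  Indep : Finset α → Prop
  nonempty : ∃ A, Indep A
  subset_indep : ∀ ⦃A B : Finset α⦄, A ⊆ B → Indep B → Indep A
  augment : ∀ ⦃A B : Finset α⦄, Indep A → Indep B → A.card < B.card →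
    ∃ e ∈ B, e ∉ A ∧ Indep (insert e A)

/-- Submodularity of a set function. -/
def SubmodularFn {α : Type u} [DecidableEq α] (f : Finset α → ℝ) : Prop :=
  ∀ X Y : Finset α, X ⊆ Y → ∀ e, e ∉ Y →
    f (insert e Y) - f Y ≤ f (insert e X) - f X

/-- Monotonicity of a set function. -/
def MonotoneFn {α : Type u} (f : Finset α → ℝ) : Prop :=
  ∀ X Y : Finset α, X ⊆ Y → f X ≤ f Y

variable {α : Type u} [DecidableEq α]

/-- The marginal gain `f(e | T) = f (T ∪ {e}) - f T`. -/
def marg (f : Finset α → ℝ) (T : Finset α) (e : α) : ℝ := f (insert e T) - f T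

/-- State of the fully dynamic algorithm.  For each level `ℓ ∈ {0, …, L}` it keeps the
candidate set `A ℓ`, the buffer `B ℓ`, the partial solution `S ℓ` and the set `S' ℓ`,
together with the weights `w`.  The fields `X ℓ` and `Y ℓ` record, for the most recent
execution of `Level-Construct(ℓ)`, the elements added to `S ℓ` there and the elements
filtered out there (they are empty if `Level-Construct(ℓ)` was never executed).
`V` is the set of elements currently inserted and not deleted.  The ghost fields
`maxA ℓ` and `maxB ℓ` record the largest cardinality ever attained by `A ℓ` and `B ℓ`
during the execution, and `insCalls ℓ` counts how many times `Level-Construct(ℓ)` was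
called directly from the `Insertion` routine. -/
structure DynState (α : Type u) where
  A : ℕ → Finset α
  B : ℕ → Finset α
  S : ℕ → Finset α
  S' : ℕ → Finset α
  w : α → ℝ
  X : ℕ → Finset α
  Y : ℕ → Finset α
  V : Finset α
  maxA : ℕ → ℕ
  maxB : ℕ → ℕ
  insCalls : ℕ → ℕ

/-- The initial state: everything is empty. -/
def DynState.init (α : Type u) : DynState α where
  A := fun _ => ∅
  B := fun _ => ∅
  S := fun _ => ∅
  S' := fun _ => ∅
  w := fun _ => 0
  X := fun _ => ∅
  Y := fun _ => ∅
  V := ∅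
  maxA := fun _ => 0
  maxB := fun _ => 0
  insCalls := fun _ => 0

/-- `A (ℓ-1)`, read as `∅` for `ℓ = 0`. -/
def prevA (st : DynState α) (ℓ : ℕ) : Finset α := if ℓ = 0 then ∅ else st.A (ℓ - 1)

/-- `B (ℓ-1)`, read as the current `B 0` for `ℓ = 0`. -/
def prevB (st : DynState α) (ℓ : ℕ) : Finset α := if ℓ = 0 then st.B 0 else st.B (ℓ - 1)

/-- `S (ℓ-1)`, read as `∅` for `ℓ = 0`. -/
def prevS (st : DynState α) (ℓ : ℕ) : Finset α := if ℓ = 0 then ∅ else st.S (ℓ - 1)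

/-- `S' (ℓ-1)`, read as `∅` for `ℓ = 0`. -/
def prevS' (st : DynState α) (ℓ : ℕ) : Finset α := if ℓ = 0 then ∅ else st.S' (ℓ - 1)

/-- Initialization of `Level-Construct(ℓ)`:
`A ℓ := A (ℓ-1) ∪ B (ℓ-1)`, `B ℓ := ∅`, `S ℓ := S (ℓ-1)`, `S' ℓ := S' (ℓ-1)`;
the record `Y ℓ` of elements filtered out in this execution is reset. -/
def initLevel (ℓ : ℕ) (st : DynState α) : DynState α :=
  { st with
    A := Function.update st.A ℓ (prevA st ℓ ∪ prevB st ℓ)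
    B := Function.update st.B ℓ ∅
    S := Function.update st.S ℓ (prevS st ℓ)
    S' := Function.update st.S' ℓ (prevS' st ℓ)
    Y := Function.update st.Y ℓ ∅
    maxA := Function.update st.maxA ℓ (max (st.maxA ℓ) (prevA st ℓ ∪ prevB st ℓ).card) }

/-- The set `E ℓ` of candidates that can be added to `S ℓ` keeping independence. -/
noncomputable def Eset (M : MatroidOn α) (ℓ : ℕ) (st : DynState α) : Finset α :=
  (st.A ℓ).filter fun e => M.Indep (insert e (st.S ℓ))

/-- The set `F ℓ` of candidates `e` that cannot be added directly but admit a
minimum-weight swap `y` with `w e > 2 · w y` (weights given by `w1`). -/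
noncomputable def Fset (M : MatroidOn α) (ℓ : ℕ) (st : DynState α) (w1 : α → ℝ) : Finset α :=
  (st.A ℓ).filter fun e =>
    ¬ M.Indep (insert e (st.S ℓ)) ∧
      ∃ y ∈ st.S ℓ, M.Indep (insert e ((st.S ℓ).erase y)) ∧
        (∀ z ∈ st.S ℓ, M.Indep (insert e ((st.S ℓ).erase z)) → w1 y ≤ w1 z) ∧
        2 * w1 y < w1 e

/-- The deterministic part of one iteration of the repeat loop of `Level-Construct(ℓ)`:
every `e ∈ A ℓ` gets weight `w e := f(e | S' ℓ)`, and `A ℓ` is replaced by `E ℓ ∪ F ℓ`;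
the filtered-out elements `A ℓ \ (E ℓ ∪ F ℓ)` are accumulated into `Y ℓ`. -/
noncomputable def filterState (f : Finset α → ℝ) (M : MatroidOn α) (ℓ : ℕ) (st : DynState α) :
    DynState α :=
  let w1 : α → ℝ := fun e =>
    if e ∈ st.A ℓ then f (insert e (st.S' ℓ)) - f (st.S' ℓ) else st.w e
  let Anew := Eset M ℓ st ∪ Fset M ℓ st w1
  { st with
    A := Function.update st.A ℓ Anew
    w := w1
    Y := Function.update st.Y ℓ (st.Y ℓ ∪ (st.A ℓ \ Anew))
    maxA := Function.update st.maxA ℓ (max (st.maxA ℓ) Anew.card) }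

/-- Auxiliary state transformation: pop `e` from `A ℓ`, replace `S ℓ` by `Snew` and add
`e` to `S' ℓ`. -/
def popState (ℓ : ℕ) (st : DynState α) (e : α) (Snew : Finset α) : DynState α :=
  { st with
    A := Function.update st.A ℓ ((st.A ℓ).erase e)
    S := Function.update st.S ℓ Snew
    S' := Function.update st.S' ℓ (insert e (st.S' ℓ))
    maxA := Function.update st.maxA ℓ (max (st.maxA ℓ) ((st.A ℓ).erase e).card) }

/-- Popping an arbitrary element `e` from `A ℓ` (the element popped is chosen uniformly at
random; the relation allows every possible choice) and adding it to the solution, swapping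
out a minimum-weight element `y` if necessary. -/
inductive LCPop (M : MatroidOn α) (ℓ : ℕ) : DynState α → DynState α → Prop
  | add {st : DynState α} {e : α} (he : e ∈ st.A ℓ)
      (hind : M.Indep (insert e (st.S ℓ))) :
      LCPop M ℓ st (popState ℓ st e (insert e (st.S ℓ)))
  | swap {st : DynState α} {e y : α} (he : e ∈ st.A ℓ)
      (hind : ¬ M.Indep (insert e (st.S ℓ)))
      (hy : y ∈ st.S ℓ) (hyind : M.Indep (insert e ((st.S ℓ).erase y)))
      (hmin : ∀ z ∈ st.S ℓ, M.Indep (insert e ((st.S ℓ).erase z)) → st.w y ≤ st.w z) :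
      LCPop M ℓ st (popState ℓ st e (insert e ((st.S ℓ).erase y)))

/-- One iteration of the repeat loop of `Level-Construct(ℓ)`: filter, and pop one random
element if `|A ℓ| ≥ n / 2^ℓ` still holds after filtering. -/
inductive LCBody (f : Finset α → ℝ) (M : MatroidOn α) (n ℓ : ℕ) :
    DynState α → DynState α → Prop
  | nopop {st : DynState α}
      (h : ((filterState f M ℓ st).A ℓ).card < n / 2 ^ ℓ) :
      LCBody f M n ℓ st (filterState f M ℓ st)
  | pop {st st' : DynState α}
      (h : ¬ ((filterState f M ℓ st).A ℓ).card < n / 2 ^ ℓ)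
      (hp : LCPop M ℓ (filterState f M ℓ st) st') :
      LCBody f M n ℓ st st'

/-- The repeat loop of `Level-Construct(ℓ)`, iterated until `|A ℓ| < n / 2^ℓ`. -/
inductive LCLoop (f : Finset α → ℝ) (M : MatroidOn α) (n ℓ : ℕ) :
    DynState α → DynState α → Prop
  | done {st st' : DynState α} (hb : LCBody f M n ℓ st st')
      (h : (st'.A ℓ).card < n / 2 ^ ℓ) : LCLoop f M n ℓ st st'
  | more {st st' st'' : DynState α} (hb : LCBody f M n ℓ st st')
      (h : ¬ (st'.A ℓ).card < n / 2 ^ ℓ)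
      (hrest : LCLoop f M n ℓ st' st'') : LCLoop f M n ℓ st st''

/-- Record `X ℓ := S ℓ \ S (ℓ-1)` at the end of an execution of `Level-Construct(ℓ)`. -/
def setXlevel (ℓ : ℕ) (st : DynState α) : DynState α :=
  { st with X := Function.update st.X ℓ (st.S ℓ \ prevS st ℓ) }

/-- `LC f M n L ℓ st st'` : a full execution of `Level-Construct(ℓ)` (including the
recursive calls at levels `ℓ+1, …, L`) starting from state `st` may end in state `st'`. -/
inductive LC (f : Finset α → ℝ) (M : MatroidOn α) (n L : ℕ) :
    ℕ → DynState α → DynState α → Prop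
  | last {st st' : DynState α} (hloop : LCLoop f M n L (initLevel L st) st') :
      LC f M n L L st (setXlevel L st')
  | step {ℓ : ℕ} {st st' st'' : DynState α} (hℓ : ℓ < L)
      (hloop : LCLoop f M n ℓ (initLevel ℓ st) st')
      (hnext : LC f M n L (ℓ + 1) (setXlevel ℓ st') st'') :
      LC f M n L ℓ st st''

/-- Add the newly inserted element `e` to every buffer `B ℓ`, `0 ≤ ℓ ≤ L`, and to `V`. -/
def insB (L : ℕ) (e : α) (st : DynState α) : DynState α :=
  { st with
    B := fun m => if m ≤ L then insert e (st.B m) else st.B m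
    V := insert e st.V
    maxB := fun m =>
      if m ≤ L then max (st.maxB m) (insert e (st.B m)).card else st.maxB m }

/-- Increment the counter of direct calls to `Level-Construct(ℓ)` from `Insertion`. -/
def bumpIns (ℓ : ℕ) (st : DynState α) : DynState α :=
  { st with insCalls := Function.update st.insCalls ℓ (st.insCalls ℓ + 1) }

/-- Remove the deleted element `e` from every `A ℓ` and `B ℓ`, and from `V`. -/
def delElems (e : α) (st : DynState α) : DynState α :=
  { st with
    A := fun m => (st.A m).erase e
    B := fun m => (st.B m).erase e
    V := st.V.erase e }

/-- A stream operation: insertion or deletion of an element. -/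
inductive Oper (α : Type u)
  | ins (e : α)
  | del (e : α)

/-- Whether an operation is an insertion. -/
def Oper.isIns : Oper α → Bool
  | .ins _ => true
  | .del _ => false

/-- Processing one operation of the stream.  An insertion adds `e` to all buffers and, if
some level `ℓ ≤ L` has `|B ℓ| ≥ n / 2^ℓ`, calls `Level-Construct(ℓ*)` for the smallest
such `ℓ*`.  A deletion (of a previously inserted, not yet deleted element) removes `e`
from all `A ℓ` and `B ℓ` and, if `e ∈ S ℓ` for some `ℓ ≤ L`, calls `Level-Construct(ℓ)`
for the smallest such `ℓ`. -/
inductive DynStep (f : Finset α → ℝ) (M : MatroidOn α) (n L : ℕ) :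
    DynState α → Oper α → DynState α → Prop
  | insTrigger {st st' : DynState α} {e : α} (ℓs : ℕ) (he : e ∉ st.V)
      (hℓ : ℓs ≤ L) (hbig : n / 2 ^ ℓs ≤ ((insB L e st).B ℓs).card)
      (hmin : ∀ m, m ≤ L → n / 2 ^ m ≤ ((insB L e st).B m).card → ℓs ≤ m)
      (hlc : LC f M n L ℓs (bumpIns ℓs (insB L e st)) st') :
      DynStep f M n L st (.ins e) st'
  | insNoTrigger {st : DynState α} {e : α} (he : e ∉ st.V)
      (h : ∀ m ≤ L, ((insB L e st).B m).card < n / 2 ^ m) :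
      DynStep f M n L st (.ins e) (insB L e st)
  | delTrigger {st st' : DynState α} {e : α} (ℓ : ℕ) (he : e ∈ st.V)
      (hℓ : ℓ ≤ L) (hin : e ∈ st.S ℓ)
      (hmin : ∀ m, m ≤ L → e ∈ st.S m → ℓ ≤ m)
      (hlc : LC f M n L ℓ (delElems e st) st') :
      DynStep f M n L st (.del e) st'
  | delNoTrigger {st : DynState α} {e : α} (he : e ∈ st.V)
      (h : ∀ m ≤ L, e ∉ st.S m) :
      DynStep f M n L st (.del e) (delElems e st)

/-- `DynRun f M n L ops st` : some execution of the fully dynamic algorithm processing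
the stream `ops` (for some realization of the random choices) ends in state `st`. -/
inductive DynRun (f : Finset α → ℝ) (M : MatroidOn α) (n L : ℕ) :
    List (Oper α) → DynState α → Prop
  | nil : DynRun f M n L [] (DynState.init α)
  | snoc {ops : List (Oper α)} {st st' : DynState α} {op : Oper α}
      (hrun : DynRun f M n L ops st) (hstep : DynStep f M n L st op st') :
      DynRun f M n L (ops ++ [op]) st'


section AuxProof

variable {f : Finset α → ℝ} {M : MatroidOn α} {n L : ℕ}

private lemma aux_div_eq (hn : n = 2 ^ L) {m : ℕ} (hm : m ≤ L) :
    n / 2 ^ m = 2 ^ (L - m) := by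
  subst hn; exact Nat.pow_div hm (by norm_num)

private lemma aux_div_pos (hn : n = 2 ^ L) {m : ℕ} (hm : m ≤ L) :
    0 < n / 2 ^ m := by
  rw [aux_div_eq hn hm]; positivity

private lemma aux_div_pred (hn : n = 2 ^ L) {ℓ : ℕ} (h1 : 1 ≤ ℓ) (hL : ℓ ≤ L) :
    n / 2 ^ (ℓ - 1) = 2 * (n / 2 ^ ℓ) := by
  rw [aux_div_eq hn (by omega), aux_div_eq hn hL]
  have h : L - (ℓ - 1) = (L - ℓ) + 1 := by omega
  rw [h, pow_succ, mul_comm]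

private lemma Eset_subset (M : MatroidOn α) (ℓ : ℕ) (st : DynState α) :
    Eset M ℓ st ⊆ st.A ℓ := filter_subset _ _

private lemma Fset_subset (M : MatroidOn α) (ℓ : ℕ) (st : DynState α) (w1 : α → ℝ) :
    Fset M ℓ st w1 ⊆ st.A ℓ := filter_subset _ _

private lemma filter_A_subset (f : Finset α → ℝ) (M : MatroidOn α) (ℓ : ℕ)
    (st : DynState α) : (filterState f M ℓ st).A ℓ ⊆ st.A ℓ := by
  simp only [filterState, Function.update_self]
  exact union_subset (Eset_subset M ℓ st) (Fset_subset M ℓ st _)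

private lemma filter_A_card (f : Finset α → ℝ) (M : MatroidOn α) (ℓ : ℕ)
    (st : DynState α) : ((filterState f M ℓ st).A ℓ).card ≤ (st.A ℓ).card :=
  card_le_card (filter_A_subset f M ℓ st)

private lemma filter_maxA (f : Finset α → ℝ) (M : MatroidOn α) (ℓ : ℕ)
    (st : DynState α) :
    (filterState f M ℓ st).maxA ℓ = max (st.maxA ℓ)
      ((filterState f M ℓ st).A ℓ).card := by
  simp [filterState]

private lemma body_props {ℓ : ℕ} {st st' : DynState α} (h : LCBody f M n ℓ st st') :
    (st'.A ℓ).card ≤ (st.A ℓ).card ∧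
    st'.maxA ℓ ≤ max (st.maxA ℓ) (st.A ℓ).card ∧
    (∀ m, m ≠ ℓ → st'.A m = st.A m) ∧
    (∀ m, m ≠ ℓ → st'.maxA m = st.maxA m) ∧
    st'.B = st.B := by
  have hf1 := filter_A_card f M ℓ st
  have hfA : ∀ m, m ≠ ℓ → (filterState f M ℓ st).A m = st.A m := by
    intro m hm; simp [filterState, Function.update_of_ne hm]
  have hfM : ∀ m, m ≠ ℓ → (filterState f M ℓ st).maxA m = st.maxA m := by
    intro m hm; simp [filterState, Function.update_of_ne hm]
  have hfMl : (filterState f M ℓ st).maxA ℓ ≤ max (st.maxA ℓ) (st.A ℓ).card := by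
    rw [filter_maxA]; exact max_le_max le_rfl hf1
  cases h with
  | nopop h =>
    exact ⟨hf1, hfMl, hfA, hfM, rfl⟩
  | pop h hp =>
    have hpop : ∀ (e : α) (Snew : Finset α),
        ((popState ℓ (filterState f M ℓ st) e Snew).A ℓ).card ≤ (st.A ℓ).card ∧
        (popState ℓ (filterState f M ℓ st) e Snew).maxA ℓ ≤
          max (st.maxA ℓ) (st.A ℓ).card ∧
        (∀ m, m ≠ ℓ → (popState ℓ (filterState f M ℓ st) e Snew).A m = st.A m) ∧
        (∀ m, m ≠ ℓ →
          (popState ℓ (filterState f M ℓ st) e Snew).maxA m = st.maxA m) ∧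
        (popState ℓ (filterState f M ℓ st) e Snew).B = st.B := by
      intro e Snew
      have hce : (((filterState f M ℓ st).A ℓ).erase e).card ≤ (st.A ℓ).card :=
        le_trans (card_le_card (erase_subset _ _)) hf1
      refine ⟨?_, ?_, ?_, ?_, rfl⟩
      · simpa [popState] using hce
      · simp only [popState, Function.update_self]
        exact max_le hfMl (le_max_of_le_right hce)
      · intro m hm; simp [popState, Function.update_of_ne hm, hfA m hm]
      · intro m hm; simp [popState, Function.update_of_ne hm, hfM m hm]
    cases hp with
    | add he hind => exact hpop _ _
    | swap he hind hy hyind hmin => exact hpop _ _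

private lemma loop_props {ℓ : ℕ} {st st' : DynState α} (h : LCLoop f M n ℓ st st') :
    (st'.A ℓ).card < n / 2 ^ ℓ ∧
    st'.maxA ℓ ≤ max (st.maxA ℓ) (st.A ℓ).card ∧
    (∀ m, m ≠ ℓ → st'.A m = st.A m) ∧
    (∀ m, m ≠ ℓ → st'.maxA m = st.maxA m) ∧
    st'.B = st.B := by
  induction h with
  | done hb h =>
    obtain ⟨h1, h2, h3, h4, h5⟩ := body_props hb
    exact ⟨h, h2, h3, h4, h5⟩
  | more hb h hrest ih =>
    obtain ⟨h1, h2, h3, h4, h5⟩ := body_props hb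
    obtain ⟨g1, g2, g3, g4, g5⟩ := ih
    refine ⟨g1, by omega, fun m hm => (g3 m hm).trans (h3 m hm),
      fun m hm => (g4 m hm).trans (h4 m hm), g5.trans h5⟩

private lemma init_loop_props (hn : n = 2 ^ L) {ℓ : ℕ} {st st1 : DynState α}
    (hloop : LCLoop f M n ℓ (initLevel ℓ st) st1) (hℓ : ℓ ≤ L)
    (hA : ∀ m, m ≤ L → (st.A m).card < n / 2 ^ m)
    (hM : ∀ m, m ≤ L → st.maxA m ≤ 4 * (n / 2 ^ m))
    (hB : (prevB st ℓ).card ≤ 2 * (n / 2 ^ ℓ)) :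
    (∀ m, m ≤ L → (st1.A m).card < n / 2 ^ m) ∧
    (∀ m, m ≤ L → st1.maxA m ≤ 4 * (n / 2 ^ m)) ∧
    st1.B ℓ = ∅ ∧ (∀ m, m ≠ ℓ → st1.B m = st.B m) := by
  obtain ⟨g1, g2, g3, g4, g5⟩ := loop_props hloop
  have hU : (initLevel ℓ st).A ℓ = prevA st ℓ ∪ prevB st ℓ := by
    simp [initLevel]
  have hpa : (prevA st ℓ).card ≤ 2 * (n / 2 ^ ℓ) := by
    rcases Nat.eq_zero_or_pos ℓ with h0 | h1
    · subst h0; simp [prevA]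
    · have := hA (ℓ - 1) (by omega)
      rw [aux_div_pred hn h1 hℓ] at this
      simp only [prevA, if_neg (by omega : ¬ ℓ = 0)]
      omega
  have hUc : (prevA st ℓ ∪ prevB st ℓ).card ≤ 4 * (n / 2 ^ ℓ) := by
    have := card_union_le (prevA st ℓ) (prevB st ℓ)
    omega
  have hmax : (initLevel ℓ st).maxA ℓ ≤ 4 * (n / 2 ^ ℓ) := by
    simp only [initLevel, Function.update_self]
    exact max_le (hM ℓ hℓ) hUc
  refine ⟨?_, ?_, ?_, ?_⟩
  · intro m hm
    rcases eq_or_ne m ℓ with rfl | hne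
    · exact g1
    · rw [g3 m hne]
      simp only [initLevel, Function.update_of_ne hne]
      exact hA m hm
  · intro m hm
    rcases eq_or_ne m ℓ with rfl | hne
    · exact le_trans g2 (max_le hmax (by rw [hU]; exact hUc))
    · rw [g4 m hne]
      simp only [initLevel, Function.update_of_ne hne]
      exact hM m hm
  · rw [g5]; simp [initLevel]
  · intro m hne; rw [g5]; simp [initLevel, Function.update_of_ne hne]

private lemma lc_inv (hn : n = 2 ^ L) {ℓ : ℕ} {st st' : DynState α}
    (h : LC f M n L ℓ st st') :
    ℓ ≤ L →
    (∀ m, m ≤ L → (st.A m).card < n / 2 ^ m) →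
    (∀ m, m ≤ L → st.maxA m ≤ 4 * (n / 2 ^ m)) →
    (prevB st ℓ).card ≤ 2 * (n / 2 ^ ℓ) →
    (∀ m, m ≤ L → (st'.A m).card < n / 2 ^ m) ∧
    (∀ m, m ≤ L → st'.maxA m ≤ 4 * (n / 2 ^ m)) ∧
    (∀ m, ℓ ≤ m → m ≤ L → st'.B m = ∅) ∧
    (∀ m, m < ℓ → st'.B m = st.B m) := by
  induction h with
  | @last st st1 hloop =>
    intro hℓ hA hM hB
    obtain ⟨p1, p2, p3, p4⟩ := init_loop_props hn hloop le_rfl hA hM hB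
    refine ⟨p1, p2, ?_, ?_⟩
    · intro m h1 h2
      have hm : m = L := le_antisymm h2 h1
      subst hm; exact p3
    · intro m hm; exact p4 m (by omega)
  | @step ℓ st st1 st2 hℓ hloop hnext ih =>
    intro _ hA hM hB
    obtain ⟨p1, p2, p3, p4⟩ := init_loop_props hn hloop (le_of_lt hℓ) hA hM hB
    have hpb : (prevB (setXlevel ℓ st1) (ℓ + 1)).card ≤ 2 * (n / 2 ^ (ℓ + 1)) := by
      have h0 : prevB (setXlevel ℓ st1) (ℓ + 1) = st1.B ℓ := by
        simp [prevB, setXlevel]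
      rw [h0, p3]; simp
    obtain ⟨q1, q2, q3, q4⟩ := ih (by omega) p1 p2 hpb
    refine ⟨q1, q2, ?_, ?_⟩
    · intro m h1 h2
      rcases eq_or_ne m ℓ with rfl | hne
      · rw [q4 m (by omega)]; exact p3
      · exact q3 m (by omega) h2
    · intro m hm
      rw [q4 m (by omega)]
      exact p4 m (by omega)

private lemma run_inv (hn : n = 2 ^ L) {ops : List (Oper α)} {st : DynState α}
    (hrun : DynRun f M n L ops st) :
    (∀ m, m ≤ L → (st.A m).card < n / 2 ^ m) ∧
    (∀ m, m ≤ L → (st.B m).card < n / 2 ^ m) ∧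
    (∀ m, m ≤ L → st.maxA m ≤ 4 * (n / 2 ^ m)) := by
  induction hrun with
  | nil =>
    refine ⟨fun m hm => ?_, fun m hm => ?_, fun m hm => ?_⟩ <;>
      simp [DynState.init, aux_div_pos hn hm]
  | @snoc ops st st' op hrun hstep ih =>
    obtain ⟨iA, iB, iM⟩ := ih
    cases hstep with
    | @insTrigger _ e ℓs he hℓs hbig hmin hlc =>
      have hBcard : ∀ m, m ≤ L → m < ℓs → ((insB L e st).B m).card < n / 2 ^ m := by
        intro m hm hlt
        rcases lt_or_ge (((insB L e st).B m).card) (n / 2 ^ m) with h | h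
        · exact h
        · exact absurd (hmin m hm h) (by omega)
      have hpb : (prevB (bumpIns ℓs (insB L e st)) ℓs).card ≤ 2 * (n / 2 ^ ℓs) := by
        rcases Nat.eq_zero_or_pos ℓs with rfl | h1
        · have h0 : prevB (bumpIns 0 (insB L e st)) 0 = insert e (st.B 0) := by
            simp [prevB, bumpIns, insB]
          rw [h0]
          have h2 := iB 0 (Nat.zero_le L)
          have hc := card_insert_le e (st.B 0)
          omega
        · have h0 : prevB (bumpIns ℓs (insB L e st)) ℓs = (insB L e st).B (ℓs - 1) := by
            simp only [prevB, if_neg (by omega : ¬ ℓs = 0)]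
            rfl
          have hlt := hBcard (ℓs - 1) (by omega) (by omega)
          rw [aux_div_pred hn h1 hℓs] at hlt
          rw [h0]
          omega
      obtain ⟨q1, q2, q3, q4⟩ := lc_inv hn hlc hℓs iA iM hpb
      refine ⟨q1, fun m hm => ?_, q2⟩
      rcases le_or_gt ℓs m with h | h
      · rw [q3 m h hm]
        simpa using aux_div_pos hn hm
      · rw [q4 m h]
        have h2 : (bumpIns ℓs (insB L e st)).B m = insert e (st.B m) := by
          simp [bumpIns, insB, hm]
        rw [h2]
        have := hBcard m hm h
        simpa [insB, hm] using this
    | insNoTrigger he h =>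
      exact ⟨iA, h, iM⟩
    | @delTrigger _ e ℓd he hℓd hin hmin hlc =>
      have hA2 : ∀ m, m ≤ L → (((delElems e st).A m)).card < n / 2 ^ m := fun m hm =>
        lt_of_le_of_lt (card_le_card (erase_subset _ _)) (iA m hm)
      have hB2 : ∀ m, m ≤ L → (((delElems e st).B m)).card < n / 2 ^ m := fun m hm =>
        lt_of_le_of_lt (card_le_card (erase_subset _ _)) (iB m hm)
      have hpb : (prevB (delElems e st) ℓd).card ≤ 2 * (n / 2 ^ ℓd) := by
        rcases Nat.eq_zero_or_pos ℓd with rfl | h1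
        · have h0 : prevB (delElems e st) 0 = (delElems e st).B 0 := if_pos rfl
          have := hB2 0 (Nat.zero_le L)
          rw [h0]
          omega
        · have := hB2 (ℓd - 1) (by omega)
          rw [aux_div_pred hn h1 hℓd] at this
          simp only [prevB, if_neg (by omega : ¬ ℓd = 0)]
          omega
      obtain ⟨q1, q2, q3, q4⟩ := lc_inv hn hlc hℓd hA2 iM hpb
      refine ⟨q1, fun m hm => ?_, q2⟩
      rcases le_or_gt ℓd m with h | h
      · rw [q3 m h hm]
        simpa using aux_div_pos hn hm
      · rw [q4 m h]
        exact hB2 m hm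
    | @delNoTrigger e he h =>
      have hA2 : ∀ m, m ≤ L → (((delElems e st).A m)).card < n / 2 ^ m := fun m hm =>
        lt_of_le_of_lt (card_le_card (erase_subset _ _)) (iA m hm)
      have hB2 : ∀ m, m ≤ L → (((delElems e st).B m)).card < n / 2 ^ m := fun m hm =>
        lt_of_le_of_lt (card_le_card (erase_subset _ _)) (iB m hm)
      exact ⟨hA2, hB2, iM⟩

end AuxProof

theorem dynamic_candidate_size_bound
    (f : Finset α → ℝ) (M : MatroidOn α)
    (hmono : MonotoneFn f) (hnorm : f ∅ = 0) (hsub : SubmodularFn f)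
    (n L : ℕ) (hn : n = 2 ^ L)
    (ops : List (Oper α))
    (hins : ops.countP (fun o => o.isIns) ≤ n)
    (hdel : ops.countP (fun o => !o.isIns) ≤ n)
    (st : DynState α) (hrun : DynRun f M n L ops st) :
    ∀ ℓ ≤ L, st.maxA ℓ ≤ 4 * n / 2 ^ ℓ := by
  intro ℓ hℓ
  obtain ⟨-, -, hM⟩ := run_inv hn hrun
  have h1 := hM ℓ hℓ
  have hd : 4 * n / 2 ^ ℓ = 4 * (n / 2 ^ ℓ) :=
    Nat.mul_div_assoc 4 (hn ▸ pow_dvd_pow 2 hℓ)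
  omega
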